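/- For every h ∈ (0,1) the inhomogeneous QLB scheme is uniquely solvable at each time step: given (ũ^k_n, ṽ^k_n) ∈ ℂ² and the sources g^{k,1}_n, g^{k,2}_n ∈ ℂ, there exists a unique pair (ũ^{k+1}_{n+1}, ṽ^{k+1}_{n−1}) ∈ ℂ² satisfying the two scheme equations. Moreover, any solution satisfies for all k ≥ 0 and n ∈ ℤ: | |ũ^{k+1}_{n+1}|² − |ũ^k_n|² |/h ≤ (8m+2)(|ũ^{k+1}_{n+1}|² + |ṽ^{k+1}_{n−1}|² + |ũ^k_n|² + |ṽ^k_n|²) + |β|·ẽ^k_n + |g^k_n|², and | |ṽ^{k+1}_{n−1}|² − |ṽ^k_n|² |/h ≤ (8m+2)(|ũ^{k+1}_{n+1}|² + |ṽ^{k+1}_{n−1}|² + |ũ^k_n|² + |ṽ^k_n|²) + |β|·ẽ^k_n + |g^k_n|², where ẽ^k_n = (|ũ^{k+1}_{n+1}|² + |ũ^k_n|²)|ṽ^k_n|² + (|ṽ^{k+1}_{n−1}|² + |ṽ^k_n|²)|ũ^k_n|². -/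

import Mathlib

open Complex

noncomputable section

/-- `G(u,v) = conj(u)·v + u·conj(v)`. -/
def Gc (u v : ℂ) : ℂ := (starRingEnd ℂ) u * v + u * (starRingEnd ℂ) v

/-- One step of the quantum lattice Boltzmann (QLB) scheme:
`a, b` are the values `u^k_n, v^k_n` and `a', b'` the values `u^{k+1}_{n+1}, v^{k+1}_{n-1}`. -/
def QLBStep (h m α β : ℝ) (a b a' b' : ℂ) : Prop :=
  a' - a = (Complex.I * (m : ℂ) * (h : ℂ) / 2) * (b' + b)
      + (Complex.I * (α : ℂ) * (h : ℂ) / 2) * (a' + a) * ((‖b‖ ^ 2 : ℝ) : ℂ)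
      + (Complex.I * (β : ℂ) * (h : ℂ) / 2) * (b' + b) * Gc a b
  ∧ b' - b = (Complex.I * (m : ℂ) * (h : ℂ) / 2) * (a' + a)
      + (Complex.I * (α : ℂ) * (h : ℂ) / 2) * (b' + b) * ((‖a‖ ^ 2 : ℝ) : ℂ)
      + (Complex.I * (β : ℂ) * (h : ℂ) / 2) * (a' + a) * Gc a b

/-- `(u, v)` is a solution of the QLB scheme. -/
def IsQLB (h m α β : ℝ) (u v : ℕ → ℤ → ℂ) : Prop :=
  ∀ (k : ℕ) (n : ℤ), QLBStep h m α β (u k n) (v k n) (u (k + 1) (n + 1)) (v (k + 1) (n - 1))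

/-- One step of the inhomogeneous QLB scheme with sources `g1, g2`. -/
def QLBStepInhom (h m α β : ℝ) (g1 g2 : ℂ) (a b a' b' : ℂ) : Prop :=
  (a' - a) / (h : ℂ) = (Complex.I * (m : ℂ) / 2) * (b' + b)
      + (Complex.I * (α : ℂ) / 2) * (a' + a) * ((‖b‖ ^ 2 : ℝ) : ℂ)
      + (Complex.I * (β : ℂ) / 2) * (b' + b) * Gc a b + g1
  ∧ (b' - b) / (h : ℂ) = (Complex.I * (m : ℂ) / 2) * (a' + a)
      + (Complex.I * (α : ℂ) / 2) * (b' + b) * ((‖a‖ ^ 2 : ℝ) : ℂ)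
      + (Complex.I * (β : ℂ) / 2) * (a' + a) * Gc a b + g2

/-- `(u, v)` is a solution of the inhomogeneous QLB scheme with sources `g1, g2`. -/
def IsQLBInhom (h m α β : ℝ) (g1 g2 : ℕ → ℤ → ℂ) (u v : ℕ → ℤ → ℂ) : Prop :=
  ∀ (k : ℕ) (n : ℤ), QLBStepInhom h m α β (g1 k n) (g2 k n)
    (u k n) (v k n) (u (k + 1) (n + 1)) (v (k + 1) (n - 1))


private lemma qlb_det_ne (r1 r2 s : ℝ) :
    (1 - Complex.I * (r1:ℂ)) * (1 - Complex.I * (r2:ℂ)) - (Complex.I * (s:ℂ)) * (Complex.I * (s:ℂ)) ≠ 0 := by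
  intro hD
  rw [Complex.ext_iff] at hD
  simp [Complex.mul_re, Complex.mul_im] at hD
  obtain ⟨h1, h2⟩ := hD
  have h3 : r2 = -r1 := by linarith
  rw [h3] at h1
  nlinarith [sq_nonneg r1, sq_nonneg s]

private lemma qlb_lin_solve (r1 r2 s : ℝ) (C1 C2 : ℂ) :
    ∃! p : ℂ × ℂ, (1 - Complex.I * (r1:ℂ)) * p.1 - (Complex.I * (s:ℂ)) * p.2 = C1
      ∧ (1 - Complex.I * (r2:ℂ)) * p.2 - (Complex.I * (s:ℂ)) * p.1 = C2 := by
  have hD := qlb_det_ne r1 r2 s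
  set D : ℂ := (1 - Complex.I * (r1:ℂ)) * (1 - Complex.I * (r2:ℂ)) - (Complex.I * (s:ℂ)) * (Complex.I * (s:ℂ)) with hDdef
  refine ⟨⟨((1 - Complex.I * (r2:ℂ)) * C1 + Complex.I * (s:ℂ) * C2) / D,
           ((1 - Complex.I * (r1:ℂ)) * C2 + Complex.I * (s:ℂ) * C1) / D⟩, ⟨?_, ?_⟩, ?_⟩
  · field_simp
    ring
  · field_simp
    ring
  · rintro ⟨x, y⟩ ⟨e1, e2⟩
    have hx : D * x = (1 - Complex.I * (r2:ℂ)) * C1 + Complex.I * (s:ℂ) * C2 := by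
      rw [hDdef]; linear_combination (1 - Complex.I * (r2:ℂ)) * e1 + (Complex.I * (s:ℂ)) * e2
    have hy : D * y = (1 - Complex.I * (r1:ℂ)) * C2 + Complex.I * (s:ℂ) * C1 := by
      rw [hDdef]; linear_combination (Complex.I * (s:ℂ)) * e1 + (1 - Complex.I * (r1:ℂ)) * e2
    refine Prod.ext ?_ ?_
    · show x = _
      rw [eq_div_iff hD, ← hx]; ring
    · show y = _
      rw [eq_div_iff hD, ← hy]; ring

private lemma qlb_Gre (a b : ℂ) : Gc a b = ((2*(a.re*b.re + a.im*b.im) : ℝ) : ℂ) := by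
  apply Complex.ext <;> simp [Gc, Complex.mul_re, Complex.mul_im] <;> ring

private lemma qlb_Gc_comm (a b : ℂ) : Gc a b = Gc b a := by
  unfold Gc; ring

private lemma qlb_iff (h m α β : ℝ) (hh : h ≠ 0) (a b g1 g2 x y : ℂ) :
    QLBStepInhom h m α β g1 g2 a b x y ↔
      ((1 - Complex.I * ((α*h*‖b‖^2/2 : ℝ):ℂ)) * x
          - (Complex.I * ((h*(m + β*(2*(a.re*b.re + a.im*b.im)))/2 : ℝ):ℂ)) * y
        = (1 + Complex.I * ((α*h*‖b‖^2/2 : ℝ):ℂ)) * a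
          + (Complex.I * ((h*(m + β*(2*(a.re*b.re + a.im*b.im)))/2 : ℝ):ℂ)) * b + (h:ℂ) * g1)
      ∧ ((1 - Complex.I * ((α*h*‖a‖^2/2 : ℝ):ℂ)) * y
          - (Complex.I * ((h*(m + β*(2*(a.re*b.re + a.im*b.im)))/2 : ℝ):ℂ)) * x
        = (1 + Complex.I * ((α*h*‖a‖^2/2 : ℝ):ℂ)) * b
          + (Complex.I * ((h*(m + β*(2*(a.re*b.re + a.im*b.im)))/2 : ℝ):ℂ)) * a + (h:ℂ) * g2) := by
  have hhc : (h:ℂ) ≠ 0 := by exact_mod_cast hh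
  unfold QLBStepInhom
  rw [div_eq_iff hhc, div_eq_iff hhc, qlb_Gre a b]
  constructor
  · rintro ⟨e1, e2⟩
    constructor
    · linear_combination (norm := (push_cast; ring)) e1
    · linear_combination (norm := (push_cast; ring)) e2
  · rintro ⟨e1, e2⟩
    constructor
    · linear_combination (norm := (push_cast; ring)) e1
    · linear_combination (norm := (push_cast; ring)) e2

set_option maxHeartbeats 2000000 in
lemma qlb_est (h m β : ℝ) {α : ℝ} (hh0 : 0 < h) (hm : 0 ≤ m) (a b x y g1 : ℂ)
    (heq : (x - a) / (h : ℂ) = (Complex.I * (m : ℂ) / 2) * (y + b)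
      + (Complex.I * (α : ℂ) / 2) * (x + a) * ((‖b‖ ^ 2 : ℝ) : ℂ)
      + (Complex.I * (β : ℂ) / 2) * (y + b) * Gc a b + g1) :
    |‖x‖ ^ 2 - ‖a‖ ^ 2| / h
      ≤ (8*m+2) * (‖x‖ ^ 2 + ‖y‖ ^ 2 + ‖a‖ ^ 2 + ‖b‖ ^ 2)
        + |β| * ((‖x‖ ^ 2 + ‖a‖ ^ 2) * ‖b‖ ^ 2
            + (‖y‖ ^ 2 + ‖b‖ ^ 2) * ‖a‖ ^ 2)
        + ‖g1‖ ^ 2 := by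
  have hhc : (h:ℂ) ≠ 0 := by
    simpa using hh0.ne'
  rw [div_eq_iff hhc] at heq
  set conjS := (starRingEnd ℂ) (x + a) with hconjS
  set z1 := (Complex.I * (m : ℂ) / 2) * (y + b) with hz1
  set z2 := (Complex.I * (α : ℂ) / 2) * (x + a) * ((‖b‖ ^ 2 : ℝ) : ℂ) with hz2d
  set z3 := (Complex.I * (β : ℂ) / 2) * (y + b) * Gc a b with hz3
  have key : ‖x‖^2 - ‖a‖^2 = ((x - a) * conjS).re := by
    rw [hconjS]
    simp [Complex.sq_norm, Complex.normSq_apply, Complex.mul_re, Complex.sub_re, Complex.sub_im,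
      Complex.add_re, Complex.add_im]
    ring
  have hsplit : ((x - a) * conjS).re
      = h * ((z1 * conjS).re + (z2 * conjS).re + (z3 * conjS).re + (g1 * conjS).re) := by
    rw [heq, show (z1 + z2 + z3 + g1) * (h:ℂ) * conjS
      = (h:ℂ) * (z1*conjS) + (h:ℂ)*(z2*conjS) + (h:ℂ)*(z3*conjS) + (h:ℂ)*(g1*conjS) from by ring]
    simp [Complex.add_re, Complex.mul_re, Complex.ofReal_re, Complex.ofReal_im]
    ring
  have hz2 : (z2 * conjS).re = 0 := by
    have h1 : z2 * conjS
        = Complex.I * ((α / 2 * ‖b‖ ^2 * Complex.normSq (x+a) : ℝ):ℂ) := by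
      rw [hz2d, hconjS, show (Complex.I * (α:ℂ) / 2) * (x + a) * ((‖b‖ ^2:ℝ):ℂ) * (starRingEnd ℂ) (x + a)
          = Complex.I * ((α:ℂ) / 2 * ((‖b‖^2:ℝ):ℂ) * ((x+a) * (starRingEnd ℂ) (x+a))) from by ring,
        Complex.mul_conj]
      push_cast
      ring
    rw [h1]
    simp only [Complex.mul_re, Complex.I_re, Complex.I_im, Complex.ofReal_im, Complex.ofReal_re]
    ring
  set X := ‖x‖
  set Y := ‖y‖
  set A := ‖a‖
  set B := ‖b‖
  set u := ‖x + a‖ with hu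
  set v := ‖y + b‖ with hv
  set g := ‖g1‖ with hg
  have hcu : ‖conjS‖ = u := by rw [hconjS, Complex.norm_conj, hu]
  have bnd : ∀ z w : ℂ, |(z*w).re| ≤ ‖z‖ * ‖w‖ :=
    fun z w => (Complex.abs_re_le_norm _).trans_eq (norm_mul _ _)
  have habs1 : ‖z1‖ = m/2 * v := by
    rw [hz1]; simp [norm_mul, norm_div, _root_.abs_of_nonneg hm, hv]
  have hGb : ‖Gc a b‖ ≤ 2 * A * B := by
    refine (norm_add_le _ _).trans ?_
    rw [norm_mul, norm_mul, Complex.norm_conj, Complex.norm_conj]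
    nlinarith [norm_nonneg a, norm_nonneg b]
  have habs3 : ‖z3‖ ≤ |β| * A * B * v := by
    rw [hz3]
    simp only [norm_mul, norm_div, Complex.norm_I, Complex.norm_real, Real.norm_eq_abs, Complex.norm_two]
    calc 1 * |β| / 2 * ‖y+b‖ * ‖Gc a b‖
        ≤ 1 * |β| / 2 * ‖y+b‖ * (2*A*B) := by
          apply mul_le_mul_of_nonneg_left hGb; positivity
      _ = |β| * A * B * v := by rw [← hv]; ring
  have ht1 : |(z1 * conjS).re| ≤ m/2 * v * u := by
    refine (bnd _ _).trans ?_
    rw [habs1, hcu]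
  have ht3 : |(z3 * conjS).re| ≤ |β| * A * B * v * u := by
    refine (bnd _ _).trans ?_
    rw [hcu]
    exact mul_le_mul_of_nonneg_right habs3 (norm_nonneg _)
  have htg : |(g1 * conjS).re| ≤ g * u := by
    refine (bnd _ _).trans ?_
    rw [hcu, hg]
  have habs : |X^2 - A^2|
      ≤ h * (m/2 * v * u + |β| * A * B * v * u + g * u) := by
    rw [key, hsplit, hz2, abs_mul, _root_.abs_of_pos hh0]
    have h4 : |(z1*conjS).re + 0 + (z3*conjS).re + (g1*conjS).re|
        ≤ |(z1*conjS).re| + |(z3*conjS).re| + |(g1*conjS).re| := by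
      calc _ ≤ |(z1*conjS).re + 0 + (z3*conjS).re| + |(g1*conjS).re| := abs_add_le _ _
        _ ≤ (|(z1*conjS).re + 0| + |(z3*conjS).re|) + |(g1*conjS).re| := by
            gcongr; exact abs_add_le _ _
        _ = |(z1*conjS).re| + |(z3*conjS).re| + |(g1*conjS).re| := by rw [add_zero]
    have := h4.trans (by linarith : |(z1*conjS).re| + |(z3*conjS).re| + |(g1*conjS).re|
        ≤ m/2 * v * u + |β| * A * B * v * u + g * u)
    exact mul_le_mul_of_nonneg_left this hh0.le
  have hXA : u ≤ X + A := norm_add_le x a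
  have hYB : v ≤ Y + B := norm_add_le y b
  have hu0 : 0 ≤ u := norm_nonneg _
  have hv0 : 0 ≤ v := norm_nonneg _
  have hX0 : 0 ≤ X := norm_nonneg _
  have hY0 : 0 ≤ Y := norm_nonneg _
  have hA0 : 0 ≤ A := norm_nonneg _
  have hB0 : 0 ≤ B := norm_nonneg _
  have hg0 : 0 ≤ g := norm_nonneg _
  clear_value X Y A B u v g
  rw [div_le_iff₀ hh0]
  refine habs.trans ?_
  rw [mul_comm]
  apply mul_le_mul_of_nonneg_right _ hh0.le
  -- pure real inequality
  have huv0 : u * v ≤ (X+A)*(Y+B) := mul_le_mul hXA hYB hv0 (by positivity)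
  have huv : u * v ≤ X^2 + Y^2 + A^2 + B^2 := by
    nlinarith [sq_nonneg (X + A - (Y + B)), sq_nonneg (X - A), sq_nonneg (Y - B)]
  have h2' : A*B*(u*v) ≤ (X^2+A^2)*B^2 + (Y^2+B^2)*A^2 := by
    have hABuv : A*B*(u*v) ≤ A*B*((X+A)*(Y+B)) := mul_le_mul_of_nonneg_left huv0 (by positivity)
    nlinarith [sq_nonneg (X*B - Y*A), sq_nonneg (X*B - A*B), sq_nonneg (A*B - A*Y)]
  have hg' : g*u ≤ g^2 + (X^2 + A^2)/2 := by
    have : g*u ≤ g*(X+A) := mul_le_mul_of_nonneg_left hXA hg0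
    nlinarith [sq_nonneg (g - X), sq_nonneg (g - A)]
  have hm' : m/2*(u*v) ≤ m/2*(X^2+Y^2+A^2+B^2) := mul_le_mul_of_nonneg_left huv (by linarith)
  have hb' : |β| * (A*B*(u*v)) ≤ |β| * ((X^2+A^2)*B^2 + (Y^2+B^2)*A^2) :=
    mul_le_mul_of_nonneg_left h2' (abs_nonneg β)
  nlinarith [mul_nonneg hm (by positivity : (0:ℝ) ≤ X^2+Y^2+A^2+B^2)]


/-- Unique solvability of the inhomogeneous QLB scheme at each time step, and
the evolution estimates for any of its solutions. -/
theorem stmt7 (h m α β : ℝ) (hh0 : 0 < h) (hh1 : h < 1) (hm : 0 ≤ m) :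
    (∀ a b g1 g2 : ℂ, ∃! p : ℂ × ℂ, QLBStepInhom h m α β g1 g2 a b p.1 p.2) ∧
    (∀ g1 g2 u v : ℕ → ℤ → ℂ, IsQLBInhom h m α β g1 g2 u v →
      ∀ (k : ℕ) (n : ℤ),
        let et : ℝ := (‖u (k + 1) (n + 1)‖ ^ 2 + ‖u k n‖ ^ 2) *
            ‖v k n‖ ^ 2
          + (‖v (k + 1) (n - 1)‖ ^ 2 + ‖v k n‖ ^ 2) *
            ‖u k n‖ ^ 2
        let gsq : ℝ := ‖g1 k n‖ ^ 2 + ‖g2 k n‖ ^ 2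
        |‖u (k + 1) (n + 1)‖ ^ 2 - ‖u k n‖ ^ 2| / h
          ≤ (8 * m + 2) * (‖u (k + 1) (n + 1)‖ ^ 2
              + ‖v (k + 1) (n - 1)‖ ^ 2
              + ‖u k n‖ ^ 2 + ‖v k n‖ ^ 2)
            + |β| * et + gsq ∧
        |‖v (k + 1) (n - 1)‖ ^ 2 - ‖v k n‖ ^ 2| / h
          ≤ (8 * m + 2) * (‖u (k + 1) (n + 1)‖ ^ 2
              + ‖v (k + 1) (n - 1)‖ ^ 2
              + ‖u k n‖ ^ 2 + ‖v k n‖ ^ 2)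
            + |β| * et + gsq) := by
  constructor
  · intro a b g1 g2
    exact (existsUnique_congr fun (p : ℂ × ℂ) => qlb_iff h m α β hh0.ne' a b g1 g2 p.1 p.2).mpr
      (qlb_lin_solve (α*h*‖b‖^2/2) (α*h*‖a‖^2/2)
        (h*(m + β*(2*(a.re*b.re + a.im*b.im)))/2) _ _)
  · intro g1 g2 u v huv k n
    obtain ⟨e1, e2⟩ := huv k n
    simp only []
    constructor
    · have h1 := qlb_est h m β hh0 hm (u k n) (v k n) (u (k+1) (n+1)) (v (k+1) (n-1)) (g1 k n) e1
      refine h1.trans ?_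
      linarith [sq_nonneg (‖g2 k n‖)]
    · rw [qlb_Gc_comm (u k n) (v k n)] at e2
      have h2 := qlb_est h m β hh0 hm (v k n) (u k n) (v (k+1) (n-1)) (u (k+1) (n+1)) (g2 k n) e2
      refine h2.trans ?_
      have heq : |β| * ((‖v (k+1) (n-1)‖ ^ 2 + ‖v k n‖ ^ 2) * ‖u k n‖ ^ 2
            + (‖u (k+1) (n+1)‖ ^ 2 + ‖u k n‖ ^ 2) * ‖v k n‖ ^ 2)
          = |β| * ((‖u (k+1) (n+1)‖ ^ 2 + ‖u k n‖ ^ 2) * ‖v k n‖ ^ 2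
            + (‖v (k+1) (n-1)‖ ^ 2 + ‖v k n‖ ^ 2) * ‖u k n‖ ^ 2) := by
        ring
      linarith [sq_nonneg (‖g1 k n‖)]

end
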